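/- The Continuum Hypothesis (2^ℵ₀ = ℵ₁) implies that the cofinality of the everywhere domination order on functions ω₁ → ω equals 2^(ℵ₁). -/

import Mathlib

open Cardinal Order

/-- The cofinality of the everywhere (pointwise) domination order on functions `X → K`. -/
noncomputable def everyCof (X K : Type*) [LE K] : Cardinal :=
  sInf {c | ∃ D : Set (X → K), #D = c ∧ ∀ f : X → K, ∃ g ∈ D, ∀ x, f x ≤ g x}

/-- The cofinality of the eventual domination order on functions `X → K`. -/
noncomputable def evenCof (X K : Type*) [LE X] [LE K] : Cardinal :=
  sInf {c | ∃ D : Set (X → K), #D = c ∧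
    ∀ f : X → K, ∃ g ∈ D, ∃ a : X, ∀ b : X, a ≤ b → f b ≤ g b}

namespace Stmt12Aux

/-- CH is universe-independent. -/
theorem ch_transfer.{v, u} (h : (2 : Cardinal.{u}) ^ ℵ₀ = aleph 1) :
    (2 : Cardinal.{v}) ^ ℵ₀ = aleph 1 := by
  refine Cardinal.lift_inj.{v, u}.mp ?_
  rw [Cardinal.lift_power, Cardinal.lift_aleph0, Cardinal.lift_two, Cardinal.lift_aleph,
    Ordinal.lift_one]
  have h2 := congrArg (Cardinal.lift.{v, u}) h
  rwa [Cardinal.lift_power, Cardinal.lift_aleph0, Cardinal.lift_two, Cardinal.lift_aleph,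
    Ordinal.lift_one] at h2

universe u

/-- The canonical type of cardinality `ℵ₁`. -/
abbrev W : Type u := (aleph 1).ord.ToType

variable {X : Type u} [LinearOrder X] [WellFoundedLT X]

/-- The nodes: elements `a : X` together with binary sequences on `Iio a`. -/
abbrev Node (X : Type u) [LinearOrder X] : Type u := Σ a : X, (↥(Set.Iio a) → Bool)

/-- The restriction of `x` below `a`. -/
def restr (x : X → Bool) (a : X) : ↥(Set.Iio a) → Bool := fun b => x b

/-- Where `x` and `y` differ. -/
def dset (x y : X → Bool) : Set X := {c | x c ≠ y c}

/-- Where a node's sequence differs from (the restriction of) `x`. -/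
def nodeDiff (x : X → Bool) (n : Node X) : Set ↥(Set.Iio n.1) := {c | n.2 c ≠ x c}

open Classical in
/-- The coding of `x : X → Bool` as a function on nodes:
at node `(a, s)` record (an injective `ℕ`-code `m a` of) the least place below `a`
where `s` differs from `x`, if any. -/
noncomputable def code (m : ∀ a : X, ↥(Set.Iio a) → ℕ) (x : X → Bool) (n : Node X) : ℕ :=
  if h : (nodeDiff x n).Nonempty then m n.1 (wellFounded_lt.min (nodeDiff x n) h) + 1 else 0

theorem dset_nonempty {x y : X → Bool} (h : x ≠ y) : (dset x y).Nonempty :=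
  Function.ne_iff.mp h

theorem min_dset_mem {x y : X → Bool} (h : (dset x y).Nonempty) :
    x (wellFounded_lt.min (dset x y) h) ≠ y (wellFounded_lt.min (dset x y) h) :=
  wellFounded_lt.min_mem (dset x y) h

/-- Evaluating the code of `y` at a restriction node of `x`, when their least difference
is below the node's level. -/
theorem code_restr (m : ∀ a : X, ↥(Set.Iio a) → ℕ) (x y : X → Bool) (a : X)
    (hne : (dset x y).Nonempty) (hlt : wellFounded_lt.min (dset x y) hne < a) :
    code m y ⟨a, restr x a⟩ = m a ⟨wellFounded_lt.min (dset x y) hne, hlt⟩ + 1 := by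
  set b₀ := wellFounded_lt.min (dset x y) hne with hb₀
  have hb₀mem : x b₀ ≠ y b₀ := min_dset_mem hne
  have hmemN : (⟨b₀, hlt⟩ : ↥(Set.Iio a)) ∈ nodeDiff y ⟨a, restr x a⟩ := hb₀mem
  have hN : (nodeDiff y ⟨a, restr x a⟩).Nonempty := ⟨_, hmemN⟩
  rw [code, dif_pos hN]
  congr 2
  have hminmem := wellFounded_lt.min_mem (nodeDiff y ⟨a, restr x a⟩) hN
  set w := wellFounded_lt.min (nodeDiff y ⟨a, restr x a⟩) hN with hw
  -- `w`'s value differs: so `w.val ∈ dset x y`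
  have hwd : (w : X) ∈ dset x y := hminmem
  have h1 : ¬ (w : X) < b₀ := WellFounded.not_lt_min _ _ hwd
  have h2 : ¬ (⟨b₀, hlt⟩ : ↥(Set.Iio a)) < w := WellFounded.not_lt_min _ _ hmemN
  have hle1 : w ≤ ⟨b₀, hlt⟩ := not_lt.mp h2
  have hle2 : (⟨b₀, hlt⟩ : ↥(Set.Iio a)) ≤ w :=
    not_lt.mp (fun hc => h1 (Subtype.coe_lt_coe.mpr hc))
  exact le_antisymm hle1 hle2

/-- Main counting lemma: for any `g`, the functions whose code is dominated by `g`
inject into the nodes. -/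
theorem mk_dominated_le [Nonempty X] (m : ∀ a : X, ↥(Set.Iio a) → ℕ)
    (hm : ∀ a, Function.Injective (m a))
    (hbdd : ∀ s : Set X, s.Countable → ∃ a : X, ∀ b ∈ s, b < a)
    (g : Node X → ℕ) :
    #{x : X → Bool // ∀ n, code m x n ≤ g n} ≤ #(Node X) := by
  classical
  -- the set of split points from `x` within the dominated family
  set A : Set (X → Bool) := {x | ∀ n, code m x n ≤ g n} with hA
  have key : ∀ x ∈ A, ∃ a : X, ∀ y ∈ A, ∀ hxy : x ≠ y,
      wellFounded_lt.min (dset x y) (dset_nonempty hxy) < a := by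
    intro x hx
    set Spl : Set X := {b | ∃ y, ∃ _ : y ∈ A, ∃ hxy : x ≠ y,
      b = wellFounded_lt.min (dset x y) (dset_nonempty hxy)} with hSpl
    have step1 : ∀ a : X, (Spl ∩ Set.Iio a).Finite := by
      intro a
      have : ∀ b ∈ Spl ∩ Set.Iio a, ∃ h : b < a,
          m a ⟨b, h⟩ + 1 ≤ g ⟨a, restr x a⟩ := by
        rintro b ⟨⟨y, hy, hxy, rfl⟩, hba⟩
        refine ⟨hba, ?_⟩
        rw [← code_restr m x y a (dset_nonempty hxy) hba]
        exact hy _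
      set F : X → ℕ := fun b => if h : b < a then m a ⟨b, h⟩ else 0 with hF
      apply Set.Finite.of_finite_image (f := F)
      · apply (Set.finite_Iio (g ⟨a, restr x a⟩)).subset
        rintro _ ⟨b, hb, rfl⟩
        obtain ⟨h, hle⟩ := this b hb
        have : F b = m a ⟨b, h⟩ := dif_pos h
        rw [this]
        exact lt_of_lt_of_le (Nat.lt_succ_self _) hle
      · intro b hb b' hb' hFbb
        obtain ⟨h, -⟩ := this b hb
        obtain ⟨h', -⟩ := this b' hb'
        rw [hF] at hFbb
        simp only [dif_pos h, dif_pos h'] at hFbb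
        have := hm a hFbb
        exact congrArg Subtype.val this
    have step2 : Spl.Finite := by
      by_contra hfin
      have hinf : Spl.Infinite := hfin
      set e := hinf.natEmbedding with he
      have hinj : Function.Injective (fun n => (e n : X)) :=
        Subtype.val_injective.comp e.injective
      obtain ⟨a, ha⟩ := hbdd (Set.range fun n => (e n : X)) (Set.countable_range _)
      have hsub : (Set.range fun n => (e n : X)) ⊆ Spl ∩ Set.Iio a := by
        rintro _ ⟨n, rfl⟩
        exact ⟨(e n).2, ha _ ⟨n, rfl⟩⟩
      exact Set.infinite_range_of_injective hinj ((step1 a).subset hsub)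
    obtain ⟨a, ha⟩ := hbdd Spl step2.countable
    refine ⟨a, fun y hy hxy => ha _ ⟨y, hy, hxy, rfl⟩⟩
  -- choose the bounds and build the injection into nodes
  choose! a ha using key
  refine Cardinal.mk_le_of_injective
    (f := fun p : {x : X → Bool // ∀ n, code m x n ≤ g n} =>
      (⟨a p.1, restr p.1 (a p.1)⟩ : Node X)) ?_
  rintro ⟨x, hx⟩ ⟨y, hy⟩ hxyΦ
  simp only at hxyΦ
  by_contra hsne
  have hxy : x ≠ y := fun hc => hsne (Subtype.ext hc)
  have hxA : x ∈ A := hx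
  have hyA : y ∈ A := hy
  have h1 : a x = a y := congrArg Sigma.fst hxyΦ
  have hlt := ha x hxA y hyA hxy
  set b₀ := wellFounded_lt.min (dset x y) (dset_nonempty hxy) with hb₀
  have hmem : x b₀ ≠ y b₀ := min_dset_mem _
  have hlt' : b₀ < a y := h1 ▸ hlt
  have heval := congrArg
    (fun n : Node X => dite ((b₀ : X) < n.1) (fun h => n.2 ⟨b₀, h⟩) (fun _ => true)) hxyΦ
  simp only [dif_pos hlt, dif_pos hlt'] at heval
  exact hmem heval

theorem aux (CH' : (2 : Cardinal.{u}) ^ ℵ₀ = aleph 1) :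
    everyCof W.{u} ℕ = 2 ^ (aleph 1 : Cardinal.{u}) := by
  classical
  haveI : IsWellOrder W.{u} (· < ·) := isWellOrder_lt
  have mkX : #W.{u} = aleph 1 := Cardinal.mk_ord_toType _
  have hXne : Nonempty W.{u} := Cardinal.mk_ne_zero_iff.mp (by rw [mkX]; exact (aleph_pos 1).ne')
  -- countability of initial segments
  have hIio : ∀ a : W.{u}, (Set.Iio a).Countable := by
    intro a
    exact (Cardinal.countable_iff_lt_aleph_one _).mpr (Cardinal.mk_Iio_ord_toType a)
  -- choose injections into ℕ
  have hminj : ∀ a : W.{u}, ∃ f : ↥(Set.Iio a) → ℕ, Function.Injective f := by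
    intro a
    have := (hIio a).to_subtype
    exact (countable_iff_exists_injective _).mp this
  choose m hm using hminj
  -- countable sets are strictly bounded
  have hbdd : ∀ s : Set W.{u}, s.Countable → ∃ a : W.{u}, ∀ b ∈ s, b < a := by
    intro s hs
    by_contra hc
    push_neg at hc
    have hub : Set.Unbounded (· < ·) s := by
      intro a
      obtain ⟨b, hb, hba⟩ := hc a
      exact ⟨b, hb, not_lt.mpr hba⟩
    have h1 : (Ordinal.type ((· < ·) : W.{u} → W.{u} → Prop)).cof ≤ #↥s := Ordinal.cof_type_le (fun a => by obtain ⟨b, hb, hba⟩ := hub a; exact ⟨b, hb, not_lt.mp hba⟩)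
    have htype : Ordinal.type ((· < ·) : W.{u} → W.{u} → Prop) = (aleph 1).ord :=
      Ordinal.type_toType _
    rw [htype, Cardinal.isRegular_aleph_one.cof_eq] at h1
    have h2 : #↥s ≤ ℵ₀ := Cardinal.mk_le_aleph0_iff.mpr hs.to_subtype
    exact (Cardinal.aleph0_lt_aleph_one).not_ge (h1.trans h2)
  -- the nodes have cardinality at most ℵ₁
  have hNode : #(Node W.{u}) ≤ aleph 1 := by
    rw [Cardinal.mk_sigma]
    calc (Cardinal.sum fun a : W.{u} => #(↥(Set.Iio a) → Bool))
        ≤ Cardinal.sum fun _ : W.{u} => aleph 1 := by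
          apply Cardinal.sum_le_sum
          intro a
          rw [Cardinal.mk_arrow, Cardinal.mk_bool, Cardinal.lift_two, Cardinal.lift_uzero]
          calc (2 : Cardinal) ^ #↥(Set.Iio a) ≤ 2 ^ ℵ₀ :=
                Cardinal.power_le_power_left two_ne_zero
                  (Cardinal.mk_le_aleph0_iff.mpr (hIio a).to_subtype)
            _ = aleph 1 := CH'
      _ = #W.{u} * aleph 1 := Cardinal.sum_const' W.{u} (aleph 1)
      _ = aleph 1 := by rw [mkX, Cardinal.mul_eq_self (aleph0_le_aleph 1)]
  -- embedding of nodes into W.{u}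
  have hNodeX : #(Node W.{u}) ≤ #W.{u} := by rw [mkX]; exact hNode
  obtain ⟨i⟩ := Cardinal.le_def _ _ |>.mp hNodeX
  have hNodene : Nonempty (Node W.{u}) :=
    ⟨⟨Classical.arbitrary W.{u}, fun _ => true⟩⟩
  set p : W.{u} → Node W.{u} := Function.invFun i with hp
  have hpi : ∀ n, p (i n) = n := Function.leftInverse_invFun i.injective
  -- cardinality of W.{u} → Bool
  have hmkXB : #(W.{u} → Bool) = 2 ^ aleph 1 := by
    rw [Cardinal.mk_arrow, Cardinal.mk_bool, Cardinal.lift_two, Cardinal.lift_uzero, mkX]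
  -- lower bound for any dominating family
  have hlower : ∀ c ∈ {c | ∃ D : Set (W.{u} → ℕ), #D = c ∧
      ∀ f : W.{u} → ℕ, ∃ g ∈ D, ∀ x, f x ≤ g x}, 2 ^ aleph 1 ≤ c := by
    rintro c ⟨D, rfl, hdom⟩
    have hDne : Nonempty ↥D := by
      obtain ⟨g, hg, -⟩ := hdom (fun _ => 0)
      exact ⟨⟨g, hg⟩⟩
    have hΨ : ∀ x : W.{u} → Bool, ∃ d : ↥D,
        ∀ n : Node W.{u}, code m x n ≤ (d : W.{u} → ℕ) (i n) := by
      intro x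
      obtain ⟨g, hg, hgdom⟩ := hdom (fun c => code m x (p c))
      refine ⟨⟨g, hg⟩, fun n => ?_⟩
      have := hgdom (i n)
      rwa [hpi n] at this
    choose Ψ hΨ using hΨ
    have hfib : ∀ d : ↥D, #↥(Ψ ⁻¹' {d}) ≤ aleph 1 := by
      intro d
      have hinj : Function.Injective
          (fun q : ↥(Ψ ⁻¹' {d}) =>
            (⟨q.1, fun n => by
              have h1 := hΨ q.1 n
              have h2 : Ψ q.1 = d := q.2
              rw [h2] at h1
              exact h1⟩ :
              {x : W.{u} → Bool // ∀ n, code m x n ≤ (d : W.{u} → ℕ) (i n)})) := by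
        intro q q' hqq
        have hv := congrArg Subtype.val hqq
        exact Subtype.ext hv
      calc #↥(Ψ ⁻¹' {d})
          ≤ #{x : W.{u} → Bool // ∀ n, code m x n ≤ (d : W.{u} → ℕ) (i n)} :=
            Cardinal.mk_le_of_injective hinj
        _ ≤ #(Node W.{u}) :=
            mk_dominated_le m hm hbdd (fun n => (d : W.{u} → ℕ) (i n))
        _ ≤ aleph 1 := hNode
    have hcount : #(W.{u} → Bool) ≤ #↥D * aleph 1 :=
      Cardinal.mk_le_mk_mul_of_mk_preimage_le Ψ hfib
    rw [hmkXB] at hcount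
    have hmax := hcount.trans (Cardinal.mul_le_max _ _)
    have h1 : ¬ (2 : Cardinal) ^ aleph 1 ≤ aleph 1 := not_le.mpr (Cardinal.cantor _)
    have h2 : ¬ (2 : Cardinal) ^ aleph 1 ≤ ℵ₀ :=
      not_le.mpr ((Cardinal.aleph0_lt_aleph_one).trans (Cardinal.cantor _))
    rcases le_max_iff.mp hmax with h | h
    · rcases le_max_iff.mp h with h' | h'
      · exact h'
      · exact absurd h' h1
    · exact absurd h h2
  -- membership: the full function space is dominating
  have hmem : (2 : Cardinal) ^ aleph 1 ∈ {c | ∃ D : Set (W.{u} → ℕ), #D = c ∧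
      ∀ f : W.{u} → ℕ, ∃ g ∈ D, ∀ x, f x ≤ g x} := by
    refine ⟨Set.univ, ?_, fun f => ⟨f, Set.mem_univ f, fun x => le_refl _⟩⟩
    rw [Cardinal.mk_univ, Cardinal.mk_arrow, Cardinal.mk_nat, Cardinal.lift_aleph0,
      Cardinal.lift_uzero, mkX]
    exact Cardinal.power_eq_two_power (aleph0_le_aleph 1)
      ((Cardinal.nat_lt_aleph0 2).le) (aleph0_le_aleph 1)
  have hgoal : everyCof W.{u} ℕ = sInf {c | ∃ D : Set (W.{u} → ℕ), #D = c ∧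
      ∀ f : W.{u} → ℕ, ∃ g ∈ D, ∀ x, f x ≤ g x} := rfl
  rw [hgoal]
  refine le_antisymm (csInf_le ⟨0, fun c _ => zero_le (a := c)⟩ hmem) (le_csInf ⟨_, hmem⟩ hlower)

end Stmt12Aux

theorem stmt_12 (CH : (2 : Cardinal) ^ ℵ₀ = aleph 1) :
    everyCof (aleph 1).ord.ToType ℕ = 2 ^ aleph 1 :=
  Stmt12Aux.aux (Stmt12Aux.ch_transfer CH)
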